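/- Let μ be a probability measure on ℝ with bounded support, let M = ess sup of the identity under μ, and assume μ({x : x > M - ε}) > 0 for all ε > 0. Define the tilted measures μ_k(A) = ∫_A e^{kx} dμ / ∫ e^{kx} dμ. Then the mean of μ_k converges to M and the variance of μ_k converges to 0 as k → ∞. -/

import Mathlib

open MeasureTheory Filter

private lemma tilt_integrable (μ : Measure ℝ) [IsProbabilityMeasure μ] {C : ℝ}
    (hbdd : ∀ᵐ x ∂μ, |x| ≤ C) (g : ℝ → ℝ) (hg : Measurable g) (D : ℝ)
    (hD : ∀ x : ℝ, |x| ≤ C → |g x| ≤ D) (k : ℝ) (hk : 0 ≤ k) :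
    Integrable (fun x => g x * Real.exp (k * x)) μ := by
  refine Integrable.mono' (integrable_const (D * Real.exp (k * C)))
    ((hg.mul (Real.measurable_exp.comp (measurable_const.mul measurable_id))).aestronglyMeasurable) ?_
  filter_upwards [hbdd] with x hx
  rw [Real.norm_eq_abs, abs_mul, abs_of_pos (Real.exp_pos _)]
  have hxC : x ≤ C := (le_abs_self x).trans hx
  exact mul_le_mul (hD x hx) (Real.exp_le_exp.2 (mul_le_mul_of_nonneg_left hxC hk))
    (Real.exp_pos _).le ((abs_nonneg _).trans (hD x hx))

/-- Exponential tilting concentrates a compactly supported measure at its essential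
supremum `M`: the means of the tilted measures `μ_k(dx) ∝ e^{kx} μ(dx)` converge to
`M` and their variances converge to `0`. -/
theorem exponential_tilting_concentrates (μ : Measure ℝ) [IsProbabilityMeasure μ]
    (C : ℝ) (hbdd : ∀ᵐ x ∂μ, |x| ≤ C)
    (M : ℝ) (hM : M = essSup id μ)
    (hmass : ∀ ε > 0, 0 < μ {x | M - ε < x}) :
    Tendsto (fun k : ℕ =>
        (∫ x, x * Real.exp ((k : ℝ) * x) ∂μ) / ∫ x, Real.exp ((k : ℝ) * x) ∂μ)
      atTop (nhds M) ∧
    Tendsto (fun k : ℕ =>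
        (∫ x, x ^ 2 * Real.exp ((k : ℝ) * x) ∂μ) / (∫ x, Real.exp ((k : ℝ) * x) ∂μ) -
          ((∫ x, x * Real.exp ((k : ℝ) * x) ∂μ) / ∫ x, Real.exp ((k : ℝ) * x) ∂μ) ^ 2)
      atTop (nhds 0) := by
  have hZint : ∀ k : ℕ, Integrable (fun x => Real.exp ((k : ℝ) * x)) μ := fun k => by
    simpa using tilt_integrable μ hbdd (fun _ => 1) measurable_const 1
      (fun x _ => by simp) k (Nat.cast_nonneg k)
  have hNint : ∀ k : ℕ, Integrable (fun x => x * Real.exp ((k : ℝ) * x)) μ := fun k =>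
    tilt_integrable μ hbdd id measurable_id C (fun x hx => hx) k (Nat.cast_nonneg k)
  have hSint : ∀ k : ℕ, Integrable (fun x => x ^ 2 * Real.exp ((k : ℝ) * x)) μ := fun k =>
    tilt_integrable μ hbdd (fun x => x ^ 2) (measurable_id.pow_const 2) (C ^ 2)
      (fun x hx => by rw [abs_pow]; exact pow_le_pow_left₀ (abs_nonneg x) hx 2) k
      (Nat.cast_nonneg k)
  have hQint : ∀ k : ℕ, Integrable (fun x => (x - M) ^ 2 * Real.exp ((k : ℝ) * x)) μ := fun k =>
    tilt_integrable μ hbdd (fun x => (x - M) ^ 2) ((measurable_id.sub_const M).pow_const 2)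
      ((C + |M|) ^ 2)
      (fun x hx => by
        rw [abs_pow]
        refine pow_le_pow_left₀ (abs_nonneg _) ?_ 2
        calc |x - M| ≤ |x| + |M| := by simpa [Real.norm_eq_abs] using norm_sub_le x M
          _ ≤ C + |M| := add_le_add_left hx _) k (Nat.cast_nonneg k)
  have hZpos : ∀ k : ℕ, 0 < ∫ x, Real.exp ((k : ℝ) * x) ∂μ := fun k => by
    rw [integral_pos_iff_support_of_nonneg (fun x => (Real.exp_pos _).le) (hZint k)]
    have hsupp : Function.support (fun x : ℝ => Real.exp ((k : ℝ) * x)) = Set.univ :=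
      Set.eq_univ_of_forall fun x => (Real.exp_pos _).ne'
    rw [hsupp]; simp
  have haeM : ∀ᵐ x ∂μ, x ≤ M := by
    have hb : IsBoundedUnder (· ≤ ·) (ae μ) (id : ℝ → ℝ) :=
      ⟨C, by filter_upwards [hbdd] with x hx using (le_abs_self x).trans hx⟩
    rw [hM]
    exact ae_le_essSup hb
  have hmassR : ∀ ε : ℝ, 0 < ε → 0 < (μ {x | M - ε < x}).toReal := fun ε hε =>
    ENNReal.toReal_pos (hmass ε hε).ne' (measure_ne_top μ _)
  have hsmeas : ∀ ε : ℝ, MeasurableSet {x : ℝ | x ≤ M - ε} :=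
    fun ε => measurableSet_le measurable_id measurable_const
  have hrnonneg : ∀ (ε : ℝ) (k : ℕ),
      0 ≤ (∫ x in {x | x ≤ M - ε}, Real.exp ((k : ℝ) * x) ∂μ) /
        ∫ x, Real.exp ((k : ℝ) * x) ∂μ := fun ε k =>
    div_nonneg (integral_nonneg fun x => (Real.exp_pos _).le) (hZpos k).le
  -- the tilted mass of {x ≤ M - ε} goes to 0
  have hr : ∀ ε : ℝ, 0 < ε → Tendsto (fun k : ℕ =>
      (∫ x in {x | x ≤ M - ε}, Real.exp ((k : ℝ) * x) ∂μ) / ∫ x, Real.exp ((k : ℝ) * x) ∂μ)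
      atTop (nhds 0) := by
    intro ε hε
    set c := (μ {x | M - ε / 2 < x}).toReal with hc
    have hcpos : 0 < c := hmassR _ (half_pos hε)
    have hub : ∀ k : ℕ, (∫ x in {x | x ≤ M - ε}, Real.exp ((k : ℝ) * x) ∂μ) /
        (∫ x, Real.exp ((k : ℝ) * x) ∂μ) ≤ Real.exp (-((k : ℝ) * (ε / 2))) / c := by
      intro k
      have hnum : (∫ x in {x | x ≤ M - ε}, Real.exp ((k : ℝ) * x) ∂μ) ≤
          Real.exp ((k : ℝ) * (M - ε)) := by
        have h1 : ‖∫ x in {x | x ≤ M - ε}, Real.exp ((k : ℝ) * x) ∂μ‖ ≤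
            Real.exp ((k : ℝ) * (M - ε)) * (μ {x | x ≤ M - ε}).toReal := by
          refine norm_setIntegral_le_of_norm_le_const_ae (measure_lt_top μ _) ?_
          refine (ae_restrict_iff' (hsmeas ε)).2 (Eventually.of_forall fun x hx => ?_)
          rw [Real.norm_eq_abs, abs_of_pos (Real.exp_pos _)]
          exact Real.exp_le_exp.2 (mul_le_mul_of_nonneg_left hx (Nat.cast_nonneg k))
        have h2 : (μ {x | x ≤ M - ε}).toReal ≤ 1 := by
          have := ENNReal.toReal_mono (by simp) (prob_le_one (μ := μ) (s := {x | x ≤ M - ε}))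
          simpa using this
        calc (∫ x in {x | x ≤ M - ε}, Real.exp ((k : ℝ) * x) ∂μ)
            ≤ ‖∫ x in {x | x ≤ M - ε}, Real.exp ((k : ℝ) * x) ∂μ‖ := (le_abs_self _).trans_eq (Real.norm_eq_abs _).symm
          _ ≤ Real.exp ((k : ℝ) * (M - ε)) * (μ {x | x ≤ M - ε}).toReal := h1
          _ ≤ Real.exp ((k : ℝ) * (M - ε)) * 1 :=
              mul_le_mul_of_nonneg_left h2 (Real.exp_pos _).le
          _ = Real.exp ((k : ℝ) * (M - ε)) := mul_one _
      have hden : Real.exp ((k : ℝ) * (M - ε / 2)) * c ≤ ∫ x, Real.exp ((k : ℝ) * x) ∂μ := by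
        have h1 : Real.exp ((k : ℝ) * (M - ε / 2)) * c ≤
            ∫ x in {x | M - ε / 2 < x}, Real.exp ((k : ℝ) * x) ∂μ :=
          setIntegral_ge_of_const_le_real (measurableSet_lt measurable_const measurable_id)
            (measure_ne_top μ _)
            (fun x hx => Real.exp_le_exp.2 (mul_le_mul_of_nonneg_left (le_of_lt hx)
              (Nat.cast_nonneg k))) ((hZint k).integrableOn)
        exact h1.trans (setIntegral_le_integral (hZint k)
          (Eventually.of_forall fun x => (Real.exp_pos _).le))
      have hdpos : 0 < Real.exp ((k : ℝ) * (M - ε / 2)) * c := mul_pos (Real.exp_pos _) hcpos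
      calc (∫ x in {x | x ≤ M - ε}, Real.exp ((k : ℝ) * x) ∂μ) /
            (∫ x, Real.exp ((k : ℝ) * x) ∂μ)
          ≤ Real.exp ((k : ℝ) * (M - ε)) / (Real.exp ((k : ℝ) * (M - ε / 2)) * c) :=
            div_le_div₀ (Real.exp_pos _).le hnum hdpos hden
        _ = Real.exp (-((k : ℝ) * (ε / 2))) / c := by
            rw [div_mul_eq_div_div, ← Real.exp_sub]
            have harg : (k : ℝ) * (M - ε) - (k : ℝ) * (M - ε / 2) = -((k : ℝ) * (ε / 2)) := by
              ring
            rw [harg]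
    have hup : Tendsto (fun k : ℕ => Real.exp (-((k : ℝ) * (ε / 2))) / c) atTop (nhds 0) := by
      have h1 : Tendsto (fun k : ℕ => (k : ℝ) * (ε / 2)) atTop atTop :=
        Tendsto.atTop_mul_const (half_pos hε) tendsto_natCast_atTop_atTop
      have h2 : Tendsto (fun k : ℕ => Real.exp (-((k : ℝ) * (ε / 2)))) atTop (nhds 0) :=
        Real.tendsto_exp_atBot.comp (tendsto_neg_atTop_atBot.comp h1)
      simpa using h2.div_const c
    exact tendsto_of_tendsto_of_tendsto_of_le_of_le tendsto_const_nhds hup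
      (fun k => hrnonneg ε k) hub
  -- the mean is at most M
  have hmle : ∀ k : ℕ, (∫ x, x * Real.exp ((k : ℝ) * x) ∂μ) /
      (∫ x, Real.exp ((k : ℝ) * x) ∂μ) ≤ M := by
    intro k
    rw [div_le_iff₀ (hZpos k)]
    calc ∫ x, x * Real.exp ((k : ℝ) * x) ∂μ ≤ ∫ x, M * Real.exp ((k : ℝ) * x) ∂μ :=
        integral_mono_ae (hNint k) ((hZint k).const_mul M)
          (by filter_upwards [haeM] with x hx using
            mul_le_mul_of_nonneg_right hx (Real.exp_pos _).le)
      _ = M * ∫ x, Real.exp ((k : ℝ) * x) ∂μ := integral_const_mul _ _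
  -- the mean is bounded below
  have hmlb : ∀ ε : ℝ, 0 < ε → ∀ k : ℕ,
      (M - ε) - (|M - ε + C| + 1) * ((∫ x in {x | x ≤ M - ε}, Real.exp ((k : ℝ) * x) ∂μ) /
        ∫ x, Real.exp ((k : ℝ) * x) ∂μ) ≤
      (∫ x, x * Real.exp ((k : ℝ) * x) ∂μ) / ∫ x, Real.exp ((k : ℝ) * x) ∂μ := by
    intro ε hε k
    set s : Set ℝ := {x | x ≤ M - ε} with hs
    have hA0 : 0 ≤ ∫ x in s, Real.exp ((k : ℝ) * x) ∂μ :=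
      integral_nonneg fun x => (Real.exp_pos _).le
    have hsplitZ : (∫ x in s, Real.exp ((k : ℝ) * x) ∂μ) +
        ∫ x in sᶜ, Real.exp ((k : ℝ) * x) ∂μ = ∫ x, Real.exp ((k : ℝ) * x) ∂μ :=
      integral_add_compl (hsmeas ε) (hZint k)
    have hsplitN : (∫ x in s, x * Real.exp ((k : ℝ) * x) ∂μ) +
        ∫ x in sᶜ, x * Real.exp ((k : ℝ) * x) ∂μ = ∫ x, x * Real.exp ((k : ℝ) * x) ∂μ :=
      integral_add_compl (hsmeas ε) (hNint k)
    have h1 : -C * ∫ x in s, Real.exp ((k : ℝ) * x) ∂μ ≤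
        ∫ x in s, x * Real.exp ((k : ℝ) * x) ∂μ := by
      rw [← integral_const_mul]
      refine setIntegral_mono_ae (((hZint k).const_mul (-C)).integrableOn)
        ((hNint k).integrableOn) ?_
      filter_upwards [hbdd] with x hx
      exact mul_le_mul_of_nonneg_right (neg_le_of_abs_le hx) (Real.exp_pos _).le
    have h2 : (M - ε) * ∫ x in sᶜ, Real.exp ((k : ℝ) * x) ∂μ ≤
        ∫ x in sᶜ, x * Real.exp ((k : ℝ) * x) ∂μ := by
      rw [← integral_const_mul]
      refine setIntegral_mono_on (((hZint k).const_mul (M - ε)).integrableOn)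
        ((hNint k).integrableOn) (hsmeas ε).compl fun x hx => ?_
      exact mul_le_mul_of_nonneg_right (le_of_lt (lt_of_not_ge hx)) (Real.exp_pos _).le
    rw [le_div_iff₀ (hZpos k)]
    have hZne : (∫ x, Real.exp ((k : ℝ) * x) ∂μ) ≠ 0 := (hZpos k).ne'
    have hexp : ((M - ε) - (|M - ε + C| + 1) *
          ((∫ x in s, Real.exp ((k : ℝ) * x) ∂μ) / ∫ x, Real.exp ((k : ℝ) * x) ∂μ)) *
          (∫ x, Real.exp ((k : ℝ) * x) ∂μ)
        = (M - ε) * (∫ x, Real.exp ((k : ℝ) * x) ∂μ) -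
          (|M - ε + C| + 1) * ∫ x in s, Real.exp ((k : ℝ) * x) ∂μ := by
      field_simp
    rw [hexp]
    have hZc : ∫ x in sᶜ, Real.exp ((k : ℝ) * x) ∂μ =
        (∫ x, Real.exp ((k : ℝ) * x) ∂μ) - ∫ x in s, Real.exp ((k : ℝ) * x) ∂μ := by
      linarith [hsplitZ]
    rw [hZc] at h2
    have hAb : (M - ε + C) * (∫ x in s, Real.exp ((k : ℝ) * x) ∂μ) ≤
        (|M - ε + C| + 1) * ∫ x in s, Real.exp ((k : ℝ) * x) ∂μ :=
      mul_le_mul_of_nonneg_right ((le_abs_self _).trans (by linarith)) hA0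
    nlinarith [h1, h2, hsplitN, hAb]
  -- convergence of the mean
  have hmean : Tendsto (fun k : ℕ =>
      (∫ x, x * Real.exp ((k : ℝ) * x) ∂μ) / ∫ x, Real.exp ((k : ℝ) * x) ∂μ)
      atTop (nhds M) := by
    rw [Metric.tendsto_atTop]
    intro δ hδ
    set K := |M - δ / 2 + C| + 1 with hK
    have hKpos : 0 < K := by positivity
    obtain ⟨N₀, hN₀⟩ := Metric.tendsto_atTop.1 (hr (δ / 2) (half_pos hδ))
      (δ / (2 * K)) (by positivity)
    refine ⟨N₀, fun k hk => ?_⟩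
    have h1 := hmle k
    have h2 := hmlb (δ / 2) (half_pos hδ) k
    rw [← hK] at h2
    have h3 := hN₀ k hk
    rw [Real.dist_eq, sub_zero, abs_of_nonneg (hrnonneg (δ / 2) k)] at h3
    have hKr : K * ((∫ x in {x | x ≤ M - δ / 2}, Real.exp ((k : ℝ) * x) ∂μ) /
        ∫ x, Real.exp ((k : ℝ) * x) ∂μ) < δ / 2 := by
      have := mul_lt_mul_of_pos_left h3 hKpos
      rwa [show K * (δ / (2 * K)) = δ / 2 by field_simp] at this
    rw [Real.dist_eq, abs_lt]
    constructor <;> linarith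
  -- the centered second moment tends to 0
  have hTnonneg : ∀ k : ℕ, 0 ≤ (∫ x, (x - M) ^ 2 * Real.exp ((k : ℝ) * x) ∂μ) /
      ∫ x, Real.exp ((k : ℝ) * x) ∂μ := fun k =>
    div_nonneg (integral_nonneg fun x => mul_nonneg (sq_nonneg _) (Real.exp_pos _).le)
      (hZpos k).le
  have hTub : ∀ ε : ℝ, 0 < ε → ∀ k : ℕ,
      (∫ x, (x - M) ^ 2 * Real.exp ((k : ℝ) * x) ∂μ) / (∫ x, Real.exp ((k : ℝ) * x) ∂μ) ≤
        ε ^ 2 + (C + |M|) ^ 2 * ((∫ x in {x | x ≤ M - ε}, Real.exp ((k : ℝ) * x) ∂μ) /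
          ∫ x, Real.exp ((k : ℝ) * x) ∂μ) := by
    intro ε hε k
    set s : Set ℝ := {x | x ≤ M - ε} with hs
    have hA0 : 0 ≤ ∫ x in s, Real.exp ((k : ℝ) * x) ∂μ :=
      integral_nonneg fun x => (Real.exp_pos _).le
    have hsplitZ : (∫ x in s, Real.exp ((k : ℝ) * x) ∂μ) +
        ∫ x in sᶜ, Real.exp ((k : ℝ) * x) ∂μ = ∫ x, Real.exp ((k : ℝ) * x) ∂μ :=
      integral_add_compl (hsmeas ε) (hZint k)
    have hsplitQ : (∫ x in s, (x - M) ^ 2 * Real.exp ((k : ℝ) * x) ∂μ) +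
        ∫ x in sᶜ, (x - M) ^ 2 * Real.exp ((k : ℝ) * x) ∂μ =
        ∫ x, (x - M) ^ 2 * Real.exp ((k : ℝ) * x) ∂μ :=
      integral_add_compl (hsmeas ε) (hQint k)
    have h1 : ∫ x in s, (x - M) ^ 2 * Real.exp ((k : ℝ) * x) ∂μ ≤
        (C + |M|) ^ 2 * ∫ x in s, Real.exp ((k : ℝ) * x) ∂μ := by
      rw [← integral_const_mul]
      refine setIntegral_mono_ae ((hQint k).integrableOn)
        (((hZint k).const_mul _).integrableOn) ?_
      filter_upwards [hbdd] with x hx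
      refine mul_le_mul_of_nonneg_right ?_ (Real.exp_pos _).le
      have h := abs_le.1 hx
      nlinarith [le_abs_self M, neg_abs_le M, abs_nonneg M]
    have h2 : ∫ x in sᶜ, (x - M) ^ 2 * Real.exp ((k : ℝ) * x) ∂μ ≤
        ε ^ 2 * ∫ x in sᶜ, Real.exp ((k : ℝ) * x) ∂μ := by
      rw [← integral_const_mul]
      refine setIntegral_mono_on_ae ((hQint k).integrableOn)
        (((hZint k).const_mul _).integrableOn) (hsmeas ε).compl ?_
      filter_upwards [haeM] with x hx hmem
      have hx2 : M - ε < x := lt_of_not_ge hmem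
      refine mul_le_mul_of_nonneg_right ?_ (Real.exp_pos _).le
      nlinarith
    rw [div_le_iff₀ (hZpos k)]
    have hZne : (∫ x, Real.exp ((k : ℝ) * x) ∂μ) ≠ 0 := (hZpos k).ne'
    have hexp : (ε ^ 2 + (C + |M|) ^ 2 *
          ((∫ x in s, Real.exp ((k : ℝ) * x) ∂μ) / ∫ x, Real.exp ((k : ℝ) * x) ∂μ)) *
          (∫ x, Real.exp ((k : ℝ) * x) ∂μ)
        = ε ^ 2 * (∫ x, Real.exp ((k : ℝ) * x) ∂μ) +
          (C + |M|) ^ 2 * ∫ x in s, Real.exp ((k : ℝ) * x) ∂μ := by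
      field_simp
    rw [hexp]
    have hεA : 0 ≤ ε ^ 2 * ∫ x in s, Real.exp ((k : ℝ) * x) ∂μ :=
      mul_nonneg (sq_nonneg ε) hA0
    nlinarith [h1, h2, hsplitQ, hsplitZ, hεA]
  have hTto : Tendsto (fun k : ℕ =>
      (∫ x, (x - M) ^ 2 * Real.exp ((k : ℝ) * x) ∂μ) / ∫ x, Real.exp ((k : ℝ) * x) ∂μ)
      atTop (nhds 0) := by
    rw [Metric.tendsto_atTop]
    intro δ hδ
    have hε2 : (Real.sqrt (δ / 2)) ^ 2 = δ / 2 := Real.sq_sqrt (by positivity)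
    have hεpos : 0 < Real.sqrt (δ / 2) := Real.sqrt_pos.2 (by positivity)
    obtain ⟨N₀, hN₀⟩ := Metric.tendsto_atTop.1 (hr _ hεpos)
      (δ / (2 * ((C + |M|) ^ 2 + 1))) (by positivity)
    refine ⟨N₀, fun k hk => ?_⟩
    have h1 := hTub _ hεpos k
    have h3 := hN₀ k hk
    rw [Real.dist_eq, sub_zero, abs_of_nonneg (hrnonneg _ k)] at h3
    rw [Real.dist_eq, sub_zero, abs_of_nonneg (hTnonneg k)]
    have hKr : (C + |M|) ^ 2 * ((∫ x in {x | x ≤ M - Real.sqrt (δ / 2)},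
          Real.exp ((k : ℝ) * x) ∂μ) / ∫ x, Real.exp ((k : ℝ) * x) ∂μ) ≤
        ((C + |M|) ^ 2 + 1) * ((∫ x in {x | x ≤ M - Real.sqrt (δ / 2)},
          Real.exp ((k : ℝ) * x) ∂μ) / ∫ x, Real.exp ((k : ℝ) * x) ∂μ) :=
      mul_le_mul_of_nonneg_right (by linarith) (hrnonneg _ k)
    have hKr2 : ((C + |M|) ^ 2 + 1) * ((∫ x in {x | x ≤ M - Real.sqrt (δ / 2)},
          Real.exp ((k : ℝ) * x) ∂μ) / ∫ x, Real.exp ((k : ℝ) * x) ∂μ) < δ / 2 := by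
      have h4 := mul_lt_mul_of_pos_left h3 (show (0:ℝ) < (C + |M|) ^ 2 + 1 by positivity)
      rwa [show ((C + |M|) ^ 2 + 1) * (δ / (2 * ((C + |M|) ^ 2 + 1))) = δ / 2 by
        field_simp] at h4
    linarith
  -- algebraic identity relating variance and centered second moment
  have hiden : ∀ k : ℕ,
      (∫ x, x ^ 2 * Real.exp ((k : ℝ) * x) ∂μ) / (∫ x, Real.exp ((k : ℝ) * x) ∂μ) -
        ((∫ x, x * Real.exp ((k : ℝ) * x) ∂μ) / ∫ x, Real.exp ((k : ℝ) * x) ∂μ) ^ 2 =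
      (∫ x, (x - M) ^ 2 * Real.exp ((k : ℝ) * x) ∂μ) / (∫ x, Real.exp ((k : ℝ) * x) ∂μ) -
        ((∫ x, x * Real.exp ((k : ℝ) * x) ∂μ) / (∫ x, Real.exp ((k : ℝ) * x) ∂μ) - M) ^ 2 := by
    intro k
    have hQeq : ∫ x, (x - M) ^ 2 * Real.exp ((k : ℝ) * x) ∂μ =
        (∫ x, x ^ 2 * Real.exp ((k : ℝ) * x) ∂μ) -
          2 * M * (∫ x, x * Real.exp ((k : ℝ) * x) ∂μ) +
          M ^ 2 * ∫ x, Real.exp ((k : ℝ) * x) ∂μ := by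
      have hfun : (fun x => (x - M) ^ 2 * Real.exp ((k : ℝ) * x)) =
          fun x => (x ^ 2 * Real.exp ((k : ℝ) * x) -
            (2 * M) * (x * Real.exp ((k : ℝ) * x))) + M ^ 2 * Real.exp ((k : ℝ) * x) := by
        funext x; ring
      have hint3 : Integrable (fun x => 2 * M * (x * Real.exp ((k : ℝ) * x))) μ :=
        (hNint k).const_mul (2 * M)
      have hint1 : Integrable (fun x =>
          x ^ 2 * Real.exp ((k : ℝ) * x) - 2 * M * (x * Real.exp ((k : ℝ) * x))) μ :=
        (hSint k).sub hint3
      have hint2 : Integrable (fun x => M ^ 2 * Real.exp ((k : ℝ) * x)) μ :=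
        (hZint k).const_mul (M ^ 2)
      rw [hfun, integral_add hint1 hint2, integral_sub (hSint k) hint3,
        integral_const_mul, integral_const_mul]
    rw [hQeq]
    have hZne : (∫ x, Real.exp ((k : ℝ) * x) ∂μ) ≠ 0 := (hZpos k).ne'
    rw [add_div, mul_div_cancel_right₀ _ hZne]
    ring
  refine ⟨hmean, ?_⟩
  have h4 : Tendsto (fun k : ℕ =>
      (∫ x, (x - M) ^ 2 * Real.exp ((k : ℝ) * x) ∂μ) / (∫ x, Real.exp ((k : ℝ) * x) ∂μ) -
        ((∫ x, x * Real.exp ((k : ℝ) * x) ∂μ) / (∫ x, Real.exp ((k : ℝ) * x) ∂μ) - M) ^ 2)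
      atTop (nhds (0 - 0)) := by
    refine hTto.sub ?_
    have h5 := (hmean.sub_const M).pow 2
    simpa using h5
  simpa using h4.congr fun k => (hiden k).symm
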